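/- arXiv:2305.15807 — 3 statements merged into one kernel-verified Lean document; each statement's English description precedes it below -/
import Mathlib

section
/- Strong duality for CBwK: in the CBwK setting, if the problem (r,c,B',ν) is feasible for some B' < B (strict componentwise inequality), then the function λ ↦ L(λ,B) = E_{X∼ν}[ max_{a∈A} { r(X,a) − ⟨c(X,a) − B, λ⟩ } ] attains its infimum over λ ∈ [0,∞)^d at some λ*_B ≥ 0, and this minimum value equals OPT(r,c,B). -/
open MeasureTheory Finset

namespace CBwK

variable {X : Type*} [MeasurableSpace X] {A : Type*} [Fintype A] [Nonempty A] {d : ℕ}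

/-- A static policy: a measurable map `X → P(A)` with components `(π_a)_{a∈A}`. -/
def IsPolicy (π : X → A → ℝ) : Prop :=
  (∀ x a, 0 ≤ π x a) ∧ (∀ x, ∑ a, π x a = 1) ∧ (∀ a, Measurable fun x => π x a)

/-- Expected reward `E_{X∼ν}[Σ_a r(X,a) π_a(X)]` of a policy. -/
noncomputable def polReward (ν : Measure X) (r : X → A → ℝ) (π : X → A → ℝ) : ℝ :=
  ∫ x, ∑ a, r x a * π x a ∂ν

/-- Component `i` of the expected cost vector `E_{X∼ν}[Σ_a c(X,a) π_a(X)]` of a policy. -/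
noncomputable def polCost (ν : Measure X) (c : X → A → Fin d → ℝ) (π : X → A → ℝ)
    (i : Fin d) : ℝ :=
  ∫ x, ∑ a, c x a i * π x a ∂ν

/-- The problem `(r,c,B',ν)` is feasible. -/
def Feasible (ν : Measure X) (c : X → A → Fin d → ℝ) (B' : Fin d → ℝ) : Prop :=
  ∃ π, IsPolicy π ∧ ∀ i, polCost ν c π i ≤ B' i

/-- `OPT(r,c,B')`: optimal expected reward under the expected-cost constraints `B'`. -/
noncomputable def OPT (ν : Measure X) (r : X → A → ℝ) (c : X → A → Fin d → ℝ)
    (B' : Fin d → ℝ) : ℝ :=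
  sSup {y : ℝ | ∃ π, IsPolicy π ∧ (∀ i, polCost ν c π i ≤ B' i) ∧ y = polReward ν r π}

/-- `L(λ,C) = E_{X∼ν}[ max_a { r(X,a) − ⟨c(X,a) − C, λ⟩ } ]`. -/
noncomputable def L (ν : Measure X) (r : X → A → ℝ) (c : X → A → Fin d → ℝ)
    (lam : Fin d → ℝ) (C : Fin d → ℝ) : ℝ :=
  ∫ x, Finset.univ.sup' Finset.univ_nonempty
    (fun a => r x a - ∑ i, (c x a i - C i) * lam i) ∂ν

/-- Euclidean norm on `ℝ^d`. -/
noncomputable def enorm (v : Fin d → ℝ) : ℝ := Real.sqrt (∑ i, (v i) ^ 2)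

/-- ℓ1-norm on `ℝ^d`. -/
noncomputable def l1norm (v : Fin d → ℝ) : ℝ := ∑ i, |v i|

/-- Smallest component of a vector of `ℝ^d` (junk value `0` if `d = 0`). -/
noncomputable def minComp (v : Fin d → ℝ) : ℝ := ⨅ i, v i


lemma integrable_of_bdd {ν : Measure X} [IsProbabilityMeasure ν] {f : X → ℝ}
    (hm : Measurable f) (C : ℝ) (hb : ∀ x, |f x| ≤ C) : Integrable f ν :=
  ⟨hm.aestronglyMeasurable, HasFiniteIntegral.of_bounded (C := C)
    (ae_of_all _ (fun x => by simpa [Real.norm_eq_abs] using hb x))⟩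

lemma IsPolicy.le_one {π : X → A → ℝ} (hπ : IsPolicy π) (x : X) (a : A) : π x a ≤ 1 := by
  have := hπ.2.1 x
  calc π x a ≤ ∑ b, π x b := Finset.single_le_sum (fun b _ => hπ.1 x b) (mem_univ a)
  _ = 1 := this

/-- Integrability of `x ↦ ∑ a, g x a * π x a` for a policy and bounded measurable `g`. -/
lemma integrable_comb {ν : Measure X} [IsProbabilityMeasure ν] {π : X → A → ℝ}
    (hπ : IsPolicy π) {g : X → A → ℝ} (hgm : ∀ a, Measurable fun x => g x a)
    (C : ℝ) (hg : ∀ x a, |g x a| ≤ C) :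
    Integrable (fun x => ∑ a, g x a * π x a) ν := by
  refine integrable_of_bdd (Finset.measurable_sum _ fun a _ => (hgm a).mul (hπ.2.2 a)) C ?_
  intro x
  calc |∑ a, g x a * π x a| ≤ ∑ a, |g x a * π x a| := Finset.abs_sum_le_sum_abs _ _
  _ ≤ ∑ a, C * π x a := by
      refine Finset.sum_le_sum fun a _ => ?_
      rw [abs_mul, abs_of_nonneg (hπ.1 x a)]
      exact mul_le_mul_of_nonneg_right (hg x a) (hπ.1 x a)
  _ = C := by rw [← Finset.mul_sum, hπ.2.1 x, mul_one]

/-- The Lagrangian integrand identity. -/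
lemma lagrangian_eq {ν : Measure X} [IsProbabilityMeasure ν] {π : X → A → ℝ}
    (hπ : IsPolicy π) (r : X → A → ℝ) (c : X → A → Fin d → ℝ) (B : Fin d → ℝ)
    (lam : Fin d → ℝ)
    (hr : ∀ x a, r x a ∈ Set.Icc (0 : ℝ) 1)
    (hc : ∀ x a i, c x a i ∈ Set.Icc (-1 : ℝ) 1)
    (hrm : ∀ a, Measurable fun x => r x a)
    (hcm : ∀ a i, Measurable fun x => c x a i) :
    ∫ x, ∑ a, (r x a - ∑ i, (c x a i - B i) * lam i) * π x a ∂ν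
      = polReward ν r π - ∑ i, lam i * (polCost ν c π i - B i) := by
  have hrb : ∀ x a, |r x a| ≤ 1 := fun x a => abs_le.2 ⟨le_trans (by norm_num) (hr x a).1, (hr x a).2⟩
  have hcb : ∀ i x a, |c x a i| ≤ 1 := fun i x a => abs_le.2 ⟨(hc x a i).1, (hc x a i).2⟩
  have hF : Integrable (fun x => ∑ a, r x a * π x a) ν := integrable_comb hπ hrm 1 hrb
  have hG : ∀ i, Integrable (fun x => ∑ a, c x a i * π x a) ν :=
    fun i => integrable_comb hπ (fun a => hcm a i) 1 (hcb i)
  have hx : ∀ x, ∑ a, (r x a - ∑ i, (c x a i - B i) * lam i) * π x a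
      = (∑ a, r x a * π x a) - ∑ i, lam i * ((∑ a, c x a i * π x a) - B i) := by
    intro x
    have h1 := hπ.2.1 x
    simp only [sub_mul, Finset.sum_sub_distrib, Finset.sum_mul]
    congr 1
    rw [show (∑ a : A, ∑ i, c x a i * lam i * π x a)
        = ∑ i, ∑ a : A, c x a i * lam i * π x a from Finset.sum_comm,
      show (∑ a : A, ∑ i, B i * lam i * π x a)
        = ∑ i, ∑ a : A, B i * lam i * π x a from Finset.sum_comm,
      ← Finset.sum_sub_distrib]
    refine Finset.sum_congr rfl fun i _ => ?_
    rw [show (∑ a : A, c x a i * lam i * π x a) = lam i * ∑ a : A, c x a i * π x a by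
        rw [Finset.mul_sum]; exact Finset.sum_congr rfl fun a _ => by ring,
      show (∑ a : A, B i * lam i * π x a) = B i * lam i * ∑ a : A, π x a from
        (Finset.mul_sum _ _ _).symm, h1]
    ring
  have hH : ∀ i, Integrable (fun x => lam i * ((∑ a, c x a i * π x a) - B i)) ν :=
    fun i => by exact ((hG i).sub (integrable_const (B i))).const_mul (lam i)
  rw [integral_congr_ae (ae_of_all _ hx)]
  rw [integral_sub hF (integrable_finset_sum _ fun i _ => hH i)]
  rw [integral_finset_sum _ (fun i _ => hH i)]
  rw [polReward]
  congr 1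
  refine Finset.sum_congr rfl fun i _ => ?_
  rw [integral_const_mul, integral_sub (hG i) (integrable_const (B i)), integral_const,
    probReal_univ, one_smul, polCost]

lemma measurable_supfun {g : X → A → ℝ} (hg : ∀ a, Measurable fun x => g x a) :
    Measurable fun x => Finset.univ.sup' Finset.univ_nonempty (fun a => g x a) := by
  have h : (fun x => Finset.univ.sup' Finset.univ_nonempty (fun a => g x a))
      = Finset.univ.sup' Finset.univ_nonempty (fun a x => g x a) := by
    funext x; rw [Finset.sup'_apply]
  rw [h]
  exact Finset.measurable_sup' _ fun a _ => hg a

/-- A measurable greedy policy achieving the pointwise max. -/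
lemma exists_greedy (g : X → A → ℝ) (hg : ∀ a, Measurable fun x => g x a) :
    ∃ π : X → A → ℝ, IsPolicy π ∧
      ∀ x, ∑ a, g x a * π x a = Finset.univ.sup' Finset.univ_nonempty (fun a => g x a) := by
  classical
  letI : LinearOrder A := LinearOrder.lift' (Fintype.equivFin A) (Fintype.equivFin A).injective
  set M : X → ℝ := fun x => Finset.univ.sup' Finset.univ_nonempty (fun a => g x a) with hM
  have hMm : Measurable M := measurable_supfun hg
  set P : X → A → Prop := fun x a => g x a = M x ∧ ∀ b, b < a → g x b ≠ M x with hP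
  have huniq : ∀ x, ∃ a, P x a ∧ ∀ y, P x y → y = a := by
    intro x
    obtain ⟨a0, -, ha0⟩ := Finset.exists_mem_eq_sup' (Finset.univ_nonempty (α := A))
      (fun a => g x a)
    set S : Finset A := Finset.univ.filter (fun a => g x a = M x) with hS
    have hSne : S.Nonempty := ⟨a0, by simp [hS, hM, ← ha0]⟩
    have hmin : S.min' hSne ∈ S := S.min'_mem hSne
    have hminP : g x (S.min' hSne) = M x := by
      have := hmin; simp only [hS, Finset.mem_filter] at this; exact this.2
    refine ⟨S.min' hSne, ⟨hminP, ?_⟩, ?_⟩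
    · intro b hb hbeq
      have hbS : b ∈ S := by simp [hS, hbeq]
      exact absurd (S.min'_le b hbS) (not_le.2 hb)
    · rintro a ⟨ha, hlt⟩
      have haS : a ∈ S := by simp [hS, ha]
      rcases lt_or_eq_of_le (S.min'_le a haS) with h | h
      · exact absurd hminP (hlt _ h)
      · exact h.symm
  refine ⟨fun x a => if P x a then 1 else 0, ⟨?_, ?_, ?_⟩, ?_⟩
  · intro x a; positivity
  · intro x
    obtain ⟨a0, ha0, hu⟩ := huniq x
    have hiff : ∀ a, P x a ↔ a = a0 := fun a => ⟨fun h => hu a h, fun h => h ▸ ha0⟩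
    simp only [hiff]
    simp
  · intro a
    have hPm : MeasurableSet {x | P x a} := by
      have h1 : ∀ b, MeasurableSet {x | g x b = M x} :=
        fun b => measurableSet_eq_fun (hg b) hMm
      have h2 : {x | P x a} = {x | g x a = M x} ∩ ⋂ (b : A), ⋂ (_ : b < a), {x | g x b = M x}ᶜ := by
        ext x; simp only [hP, Set.mem_setOf_eq, Set.mem_inter_iff, Set.mem_iInter,
          Set.mem_compl_iff]
      rw [h2]
      exact (h1 a).inter (MeasurableSet.iInter fun b => MeasurableSet.iInter fun _ => (h1 b).compl)
    exact Measurable.ite hPm measurable_const measurable_const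
  · intro x
    obtain ⟨a0, ha0, hu⟩ := huniq x
    have hiff : ∀ a, P x a ↔ a = a0 := fun a => ⟨fun h => hu a h, fun h => h ▸ ha0⟩
    simp only [hiff, mul_ite, mul_one, mul_zero]
    rw [Finset.sum_ite_eq' Finset.univ a0 (fun a => g x a)]
    simp [ha0.1]
    rfl


lemma gfun_bdd {r : X → A → ℝ} {c : X → A → Fin d → ℝ} (B : Fin d → ℝ) (lam : Fin d → ℝ)
    (hr : ∀ x a, r x a ∈ Set.Icc (0 : ℝ) 1)
    (hc : ∀ x a i, c x a i ∈ Set.Icc (-1 : ℝ) 1) (x : X) (a : A) :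
    |r x a - ∑ i, (c x a i - B i) * lam i| ≤ 1 + ∑ i, (1 + |B i|) * |lam i| := by
  have h1 : |r x a| ≤ 1 := abs_le.2 ⟨le_trans (by norm_num) (hr x a).1, (hr x a).2⟩
  have h2 : |∑ i, (c x a i - B i) * lam i| ≤ ∑ i, (1 + |B i|) * |lam i| := by
    refine le_trans (Finset.abs_sum_le_sum_abs _ _) (Finset.sum_le_sum fun i _ => ?_)
    rw [abs_mul]
    refine mul_le_mul_of_nonneg_right ?_ (abs_nonneg _)
    refine le_trans (abs_sub _ _) ?_
    have := abs_le.2 ⟨(hc x a i).1, (hc x a i).2⟩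
    linarith
  calc |r x a - ∑ i, (c x a i - B i) * lam i|
      ≤ |r x a| + |∑ i, (c x a i - B i) * lam i| := abs_sub _ _
  _ ≤ 1 + ∑ i, (1 + |B i|) * |lam i| := add_le_add h1 h2

lemma abs_supfun_le {g : X → A → ℝ} {C : ℝ} (x : X) (hb : ∀ a, |g x a| ≤ C) :
    |Finset.univ.sup' Finset.univ_nonempty (fun a => g x a)| ≤ C := by
  rw [abs_le]
  constructor
  · exact le_trans (abs_le.1 (hb Classical.ofNonempty)).1
      (Finset.le_sup' _ (Finset.mem_univ _))
  · exact Finset.sup'_le _ _ fun a _ => (abs_le.1 (hb a)).2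

lemma integrable_supfun {ν : Measure X} [IsProbabilityMeasure ν] {g : X → A → ℝ}
    (hg : ∀ a, Measurable fun x => g x a) (C : ℝ) (hb : ∀ x a, |g x a| ≤ C) :
    Integrable (fun x => Finset.univ.sup' Finset.univ_nonempty (fun a => g x a)) ν :=
  integrable_of_bdd (measurable_supfun hg) C fun x => abs_supfun_le x (hb x)

/-- Weak duality. -/
lemma weak_duality {ν : Measure X} [IsProbabilityMeasure ν] {π : X → A → ℝ}
    (hπ : IsPolicy π) (r : X → A → ℝ) (c : X → A → Fin d → ℝ) (B : Fin d → ℝ)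
    (lam : Fin d → ℝ)
    (hr : ∀ x a, r x a ∈ Set.Icc (0 : ℝ) 1)
    (hc : ∀ x a i, c x a i ∈ Set.Icc (-1 : ℝ) 1)
    (hrm : ∀ a, Measurable fun x => r x a)
    (hcm : ∀ a i, Measurable fun x => c x a i)
    (hfe : ∀ i, polCost ν c π i ≤ B i) (hlam : ∀ i, 0 ≤ lam i) :
    polReward ν r π ≤ L ν r c lam B := by
  set g : X → A → ℝ := fun x a => r x a - ∑ i, (c x a i - B i) * lam i with hgdef
  have hgm : ∀ a, Measurable fun x => g x a := fun a =>
    (hrm a).sub (Finset.measurable_sum _ fun i _ => ((hcm a i).sub measurable_const).mul_const _)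
  set C : ℝ := 1 + ∑ i, (1 + |B i|) * |lam i| with hC
  have hgb : ∀ x a, |g x a| ≤ C := fun x a => gfun_bdd B lam hr hc x a
  have key := lagrangian_eq (ν := ν) hπ r c B lam hr hc hrm hcm
  have h1 : polReward ν r π ≤ polReward ν r π - ∑ i, lam i * (polCost ν c π i - B i) := by
    have : ∑ i, lam i * (polCost ν c π i - B i) ≤ 0 := by
      refine Finset.sum_nonpos fun i _ => ?_
      have h := hfe i
      nlinarith [hlam i]
    linarith
  refine le_trans h1 ?_
  rw [← key]
  refine integral_mono (integrable_comb hπ hgm C hgb) (integrable_supfun hgm C hgb) ?_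
  intro x
  have h2 := hπ.2.1 x
  calc ∑ a, g x a * π x a
      ≤ ∑ a, (Finset.univ.sup' Finset.univ_nonempty (fun a => g x a)) * π x a :=
        Finset.sum_le_sum fun a _ =>
          mul_le_mul_of_nonneg_right (Finset.le_sup' _ (Finset.mem_univ a)) (hπ.1 x a)
  _ = Finset.univ.sup' Finset.univ_nonempty (fun a => g x a) := by
        rw [← Finset.mul_sum, h2, mul_one]

lemma polReward_le_one {ν : Measure X} [IsProbabilityMeasure ν] {π : X → A → ℝ}
    (hπ : IsPolicy π) {r : X → A → ℝ} (hr : ∀ x a, r x a ∈ Set.Icc (0 : ℝ) 1)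
    (hrm : ∀ a, Measurable fun x => r x a) :
    polReward ν r π ≤ 1 := by
  have hrb : ∀ x a, |r x a| ≤ 1 :=
    fun x a => abs_le.2 ⟨le_trans (by norm_num) (hr x a).1, (hr x a).2⟩
  have h1 : polReward ν r π ≤ ∫ _x, (1 : ℝ) ∂ν := by
    refine integral_mono (integrable_comb hπ hrm 1 hrb) (integrable_const _) fun x => ?_
    calc ∑ a, r x a * π x a ≤ ∑ a, 1 * π x a :=
      Finset.sum_le_sum fun a _ => mul_le_mul_of_nonneg_right (hr x a).2 (hπ.1 x a)
    _ = 1 := by rw [← Finset.mul_sum, hπ.2.1 x, one_mul]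
  simpa using h1

/-- Mixtures of policies. -/
lemma IsPolicy.mix {π π' : X → A → ℝ} (hπ : IsPolicy π) (hπ' : IsPolicy π')
    {a b : ℝ} (ha : 0 ≤ a) (hb : 0 ≤ b) (hab : a + b = 1) :
    IsPolicy (fun x z => a * π x z + b * π' x z) := by
  refine ⟨fun x z => add_nonneg (mul_nonneg ha (hπ.1 x z)) (mul_nonneg hb (hπ'.1 x z)),
    fun x => ?_, fun z => ((hπ.2.2 z).const_mul a).add ((hπ'.2.2 z).const_mul b)⟩
  rw [Finset.sum_add_distrib, ← Finset.mul_sum, ← Finset.mul_sum, hπ.2.1 x, hπ'.2.1 x]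
  simpa using hab

lemma integral_comb_mix {ν : Measure X} [IsProbabilityMeasure ν] {π π' : X → A → ℝ}
    (hπ : IsPolicy π) (hπ' : IsPolicy π') {g : X → A → ℝ}
    (hgm : ∀ a, Measurable fun x => g x a) (C : ℝ) (hgb : ∀ x a, |g x a| ≤ C)
    (a b : ℝ) :
    (∫ x, ∑ z, g x z * (a * π x z + b * π' x z) ∂ν)
      = a * (∫ x, ∑ z, g x z * π x z ∂ν) + b * ∫ x, ∑ z, g x z * π' x z ∂ν := by
  have hpt : ∀ x, ∑ z, g x z * (a * π x z + b * π' x z)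
      = a * (∑ z, g x z * π x z) + b * ∑ z, g x z * π' x z := by
    intro x
    rw [Finset.mul_sum, Finset.mul_sum, ← Finset.sum_add_distrib]
    exact Finset.sum_congr rfl fun z _ => by ring
  rw [integral_congr_ae (ae_of_all _ hpt),
    integral_add ((integrable_comb hπ hgm C hgb).const_mul a)
      ((integrable_comb hπ' hgm C hgb).const_mul b),
    integral_const_mul, integral_const_mul]

lemma polReward_mix {ν : Measure X} [IsProbabilityMeasure ν] {π π' : X → A → ℝ}
    (hπ : IsPolicy π) (hπ' : IsPolicy π') {r : X → A → ℝ}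
    (hr : ∀ x a, r x a ∈ Set.Icc (0 : ℝ) 1) (hrm : ∀ a, Measurable fun x => r x a)
    (a b : ℝ) :
    polReward ν r (fun x z => a * π x z + b * π' x z)
      = a * polReward ν r π + b * polReward ν r π' :=
  integral_comb_mix hπ hπ' hrm 1
    (fun x z => abs_le.2 ⟨le_trans (by norm_num) (hr x z).1, (hr x z).2⟩) a b

lemma polCost_mix {ν : Measure X} [IsProbabilityMeasure ν] {π π' : X → A → ℝ}
    (hπ : IsPolicy π) (hπ' : IsPolicy π') {c : X → A → Fin d → ℝ}
    (hc : ∀ x a i, c x a i ∈ Set.Icc (-1 : ℝ) 1)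
    (hcm : ∀ a i, Measurable fun x => c x a i) (a b : ℝ) (i : Fin d) :
    polCost ν c (fun x z => a * π x z + b * π' x z) i
      = a * polCost ν c π i + b * polCost ν c π' i :=
  integral_comb_mix hπ hπ' (fun z => hcm z i) 1
    (fun x z => abs_le.2 ⟨(hc x z i).1, (hc x z i).2⟩) a b


/-- Strong duality for CBwK: if the problem is feasible for some `B' < B` (componentwise),
then `λ ↦ L(λ,B)` attains its infimum over `λ ≥ 0` at some `λ*_B`, whose value equals
`OPT(r,c,B)`. -/
theorem strong_duality
    {X : Type*} [MeasurableSpace X] (ν : Measure X) [IsProbabilityMeasure ν]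
    {A : Type*} [Fintype A] [Nonempty A] {d : ℕ} (hd : 0 < d)
    (r : X → A → ℝ) (c : X → A → Fin d → ℝ) (B : Fin d → ℝ)
    (hr : ∀ x a, r x a ∈ Set.Icc (0 : ℝ) 1)
    (hc : ∀ x a i, c x a i ∈ Set.Icc (-1 : ℝ) 1)
    (hrm : ∀ a, Measurable fun x => r x a)
    (hcm : ∀ a i, Measurable fun x => c x a i)
    (hfeas : ∃ B' : Fin d → ℝ, (∀ i, B' i < B i) ∧ Feasible ν c B') :
    ∃ lamstar : Fin d → ℝ, (∀ i, 0 ≤ lamstar i) ∧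
      (∀ lam : Fin d → ℝ, (∀ i, 0 ≤ lam i) → L ν r c lamstar B ≤ L ν r c lam B) ∧
      L ν r c lamstar B = OPT ν r c B := by
  classical
  obtain ⟨B', hB', π', hπ', hπ'c⟩ := hfeas
  have hfeB : ∀ i, polCost ν c π' i ≤ B i := fun i => le_trans (hπ'c i) (le_of_lt (hB' i))
  set Sopt : Set ℝ :=
    {y | ∃ π, IsPolicy π ∧ (∀ i, polCost ν c π i ≤ B i) ∧ y = polReward ν r π} with hSopt
  have hne : (polReward ν r π') ∈ Sopt := ⟨π', hπ', hfeB, rfl⟩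
  have hbdd : BddAbove Sopt := ⟨1, fun y hy => by
    obtain ⟨π, hπ, -, rfl⟩ := hy; exact polReward_le_one hπ hr hrm⟩
  have hOPTeq : OPT ν r c B = sSup Sopt := rfl
  set pstar : ℝ := sSup Sopt with hpstar
  have hle1 : ∀ {π}, IsPolicy π → (∀ i, polCost ν c π i ≤ B i) → polReward ν r π ≤ pstar :=
    fun {π} hπ hfe => le_csSup hbdd ⟨_, hπ, hfe, rfl⟩
  -- weak duality: pstar ≤ L for every nonnegative lam
  have hweak : ∀ lam : Fin d → ℝ, (∀ i, 0 ≤ lam i) → pstar ≤ L ν r c lam B := by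
    intro lam hlam
    refine csSup_le ⟨_, hne⟩ fun y hy => ?_
    obtain ⟨π, hπ, hfe, rfl⟩ := hy
    exact weak_duality hπ r c B lam hr hc hrm hcm hfe hlam
  -- Separation setup
  set SA : Set ((Fin d → ℝ) × ℝ) := {p | ∃ π, IsPolicy π ∧
    (∀ i, polCost ν c π i - B i ≤ p.1 i) ∧ p.2 ≤ polReward ν r π} with hSA
  set SB : Set ((Fin d → ℝ) × ℝ) := {p | (∀ i, p.1 i < 0) ∧ pstar < p.2} with hSB
  have hSBeq : SB = (⋂ i : Fin d, {p : (Fin d → ℝ) × ℝ | p.1 i < 0}) ∩ {p | pstar < p.2} := by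
    ext p; simp [hSB, Set.mem_iInter, forall_and]
  have hSBopen : IsOpen SB := by
    rw [hSBeq]
    exact (isOpen_iInter_of_finite fun i =>
      isOpen_lt ((continuous_apply i).comp continuous_fst) continuous_const).inter
      (isOpen_lt continuous_const continuous_snd)
  have hSBconv : Convex ℝ SB := by
    rw [hSBeq]
    refine (convex_iInter fun i => convex_halfSpace_lt ⟨fun p q => rfl, fun s p => rfl⟩ 0).inter
      (convex_halfSpace_gt ⟨fun p q => rfl, fun s p => rfl⟩ pstar)
  have hSAconv : Convex ℝ SA := by
    rintro p ⟨π₁, hπ₁, hc₁, hr₁⟩ q ⟨π₂, hπ₂, hc₂, hr₂⟩ a b ha hb hab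
    refine ⟨fun x z => a * π₁ x z + b * π₂ x z, hπ₁.mix hπ₂ ha hb hab, fun i => ?_, ?_⟩
    · rw [polCost_mix hπ₁ hπ₂ hc hcm a b i]
      have h1 : a * (polCost ν c π₁ i - B i) ≤ a * p.1 i :=
        mul_le_mul_of_nonneg_left (hc₁ i) ha
      have h2 : b * (polCost ν c π₂ i - B i) ≤ b * q.1 i :=
        mul_le_mul_of_nonneg_left (hc₂ i) hb
      have h3 : (a • p + b • q).1 i = a * p.1 i + b * q.1 i := rfl
      have h4 : a * (polCost ν c π₁ i - B i) + b * (polCost ν c π₂ i - B i)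
          = a * polCost ν c π₁ i + b * polCost ν c π₂ i - B i := by
        linear_combination (-(B i)) * hab
      rw [h3]
      linarith
    · rw [polReward_mix hπ₁ hπ₂ hr hrm a b]
      have : (a • p + b • q).2 = a * p.2 + b * q.2 := rfl
      rw [this]
      exact add_le_add (mul_le_mul_of_nonneg_left hr₁ ha) (mul_le_mul_of_nonneg_left hr₂ hb)
  have hdisj : Disjoint SB SA := by
    rw [Set.disjoint_left]
    rintro p ⟨hp1, hp2⟩ ⟨π, hπ, hcp, hrp⟩
    have hfe : ∀ i, polCost ν c π i ≤ B i := fun i => by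
      have := hcp i; have := hp1 i; linarith
    have := hle1 hπ hfe
    linarith
  obtain ⟨f, α, hfB, hfA⟩ := geometric_hahn_banach_open hSBconv hSBopen hSAconv hdisj
  set gv : Fin d → ℝ := fun i => f ((fun j => if i = j then (1:ℝ) else 0), (0:ℝ)) with hgv
  set μ : ℝ := f ((0 : Fin d → ℝ), (1:ℝ)) with hμdef
  have h0 : ∀ u : Fin d → ℝ, f (u, (0:ℝ)) = ∑ i, u i * gv i := by
    intro u
    have hu : ((u, (0:ℝ)) : (Fin d → ℝ) × ℝ)
        = ∑ i, u i • (((fun j => if i = j then (1:ℝ) else 0) : Fin d → ℝ), (0:ℝ)) := by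
      refine Prod.ext ?_ ?_
      · rw [Prod.fst_sum]
        simpa [Prod.smul_mk] using pi_eq_sum_univ u
      · rw [Prod.snd_sum]
        simp
    rw [hu, map_sum]
    exact Finset.sum_congr rfl fun i _ => by rw [f.map_smul, smul_eq_mul]
  have hdecomp : ∀ u (t : ℝ), f (u, t) = (∑ i, u i * gv i) + t * μ := by
    intro u t
    have h1 : ((u, t) : (Fin d → ℝ) × ℝ) = (u, (0:ℝ)) + t • ((0 : Fin d → ℝ), (1:ℝ)) := by
      refine Prod.ext ?_ ?_ <;> simp
    rw [h1, map_add, f.map_smul, h0, smul_eq_mul]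
  -- base point from Slater policy
  set v' : Fin d → ℝ := fun i => polCost ν c π' i - B i with hv'def
  have hv' : ∀ i, v' i < 0 := fun i => by
    have h1 := hπ'c i; have h2 := hB' i; simp only [hv'def]; linarith
  set R' : ℝ := polReward ν r π' with hR'def
  have hA0 : ((v', R') : (Fin d → ℝ) × ℝ) ∈ SA := ⟨π', hπ', fun i => le_refl _, le_refl _⟩
  have hfvR : α ≤ (∑ i, v' i * gv i) + R' * μ := by
    have := hfA _ hA0; rwa [hdecomp] at this
  -- gv is nonnegative
  have hgvnn : ∀ i, 0 ≤ gv i := by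
    intro i
    by_contra hneg
    push_neg at hneg
    set s : ℝ := (α - ((∑ j, v' j * gv j) + R' * μ) - 1) / gv i with hsdef
    have hfv : α ≤ (∑ j, v' j * gv j) + R' * μ := hfvR
    have hs0 : 0 ≤ s := by
      rw [hsdef]
      apply div_nonneg_iff.2
      right
      constructor <;> linarith
    have hmem : ((fun j => v' j + s * (if i = j then 1 else 0)), R') ∈ SA := by
      refine ⟨π', hπ', fun j => ?_, le_refl _⟩
      have : (0:ℝ) ≤ s * (if i = j then 1 else 0) := by
        positivity
      simp only [hv'def] at *
      linarith [this]
    have hval := hfA _ hmem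
    rw [hdecomp] at hval
    have hsum : ∑ j, (v' j + s * (if i = j then 1 else 0)) * gv j
        = (∑ j, v' j * gv j) + s * gv i := by
      simp only [show ∀ j, (v' j + s * (if i = j then 1 else 0)) * gv j
          = v' j * gv j + s * ((if i = j then 1 else 0) * gv j) from fun j => by ring]
      rw [Finset.sum_add_distrib, ← Finset.mul_sum]
      simp [Finset.sum_ite_eq]
    rw [hsum] at hval
    have hsgv : s * gv i = α - ((∑ j, v' j * gv j) + R' * μ) - 1 := by
      rw [hsdef, div_mul_cancel₀]
      exact ne_of_lt hneg
    nlinarith [hval, hsgv]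

  -- evaluation on SB points
  have hBval : ∀ ε s : ℝ, 0 < ε → 0 < s →
      -(ε * ∑ j, gv j) + (pstar + s) * μ < α := by
    intro ε s hε hs
    have hmem : ((((fun _ => -ε) : Fin d → ℝ), pstar + s) : (Fin d → ℝ) × ℝ) ∈ SB :=
      ⟨fun i => by simpa using hε, by show pstar < pstar + s; linarith⟩
    have h := hfB _ hmem
    rw [hdecomp] at h
    have hsum : ∑ j, (-ε) * gv j = -(ε * ∑ j, gv j) := by
      rw [← Finset.mul_sum]; ring
    linarith [h, hsum]
  have hgs : 0 ≤ ∑ j, gv j := Finset.sum_nonneg fun j _ => hgvnn j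
  have hμle : μ ≤ 0 := by
    by_contra hpos
    push_neg at hpos
    set K : ℝ := -(1 * ∑ j, gv j) + pstar * μ with hK
    set s : ℝ := max 1 ((α - K) / μ + 1) with hs
    have hs1 : (1:ℝ) ≤ s := le_max_left _ _
    have hs2 : (α - K) / μ + 1 ≤ s := le_max_right _ _
    have h := hBval 1 s one_pos (by linarith)
    have h3 : ((α - K) / μ + 1) * μ = α - K + μ := by field_simp
    have h4 : ((α - K) / μ + 1) * μ ≤ s * μ := mul_le_mul_of_nonneg_right hs2 (le_of_lt hpos)
    nlinarith [h, h3, h4]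
  have hμp : μ * pstar ≤ α := by
    refine le_of_forall_pos_le_add fun ε hε => ?_
    set T : ℝ := (∑ j, gv j) - μ with hTdef
    have hT : 0 ≤ T := by rw [hTdef]; linarith
    have hT1 : 0 < T + 1 := by linarith
    set δ : ℝ := ε / (T + 1) with hδ
    have hδpos : 0 < δ := div_pos hε hT1
    have h := hBval δ δ hδpos hδpos
    have hδT : δ * (T + 1) = ε := by rw [hδ]; field_simp
    nlinarith [h, hδT, hδpos, hT1, hT]
  have hμneg : μ < 0 := by
    rcases lt_or_eq_of_le hμle with h | h
    · exact h
    exfalso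
    rw [h, zero_mul] at hμp
    by_cases hgz : ∀ j, gv j = 0
    · have h1 : α ≤ 0 := by
        have := hfvR
        have hz : ∑ i, v' i * gv i = 0 := Finset.sum_eq_zero fun i _ => by rw [hgz i, mul_zero]
        rw [hz, h] at this
        linarith
      have h2 := hBval 1 1 one_pos one_pos
      have hz2 : ∑ j, gv j = 0 := Finset.sum_eq_zero fun j _ => hgz j
      rw [hz2, h] at h2
      linarith
    · push_neg at hgz
      obtain ⟨i, hi⟩ := hgz
      have higt : 0 < gv i := lt_of_le_of_ne (hgvnn i) (Ne.symm hi)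
      have hterm : ∑ j, v' j * gv j ≤ v' i * gv i := by
        calc ∑ j, v' j * gv j ≤ ∑ j, (if j = i then v' i * gv i else 0) := by
              refine Finset.sum_le_sum fun j _ => ?_
              by_cases hj : j = i
              · simp [hj]
              · simp only [hj, if_false]
                exact mul_nonpos_iff.2 (Or.inr ⟨le_of_lt (hv' j), hgvnn j⟩)
        _ = v' i * gv i := by rw [Finset.sum_ite_eq' Finset.univ i (fun _ => v' i * gv i)]; simp
      have hneg : v' i * gv i < 0 := mul_neg_of_neg_of_pos (hv' i) higt
      have := hfvR
      rw [h] at this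
      nlinarith [this, hterm, hneg, hμp]
  -- the optimal multiplier
  set m : ℝ := -μ with hm
  have hmpos : 0 < m := by rw [hm]; linarith
  set lam : Fin d → ℝ := fun i => gv i / m with hlamdef
  have hlamnn : ∀ i, 0 ≤ lam i := fun i => div_nonneg (hgvnn i) (le_of_lt hmpos)
  have key : ∀ π : X → A → ℝ, IsPolicy π →
      polReward ν r π - ∑ i, lam i * (polCost ν c π i - B i) ≤ pstar := by
    intro π hπ
    have hmem : ((((fun i => polCost ν c π i - B i) : Fin d → ℝ), polReward ν r π)
        : (Fin d → ℝ) × ℝ) ∈ SA := ⟨π, hπ, fun i => le_refl _, le_refl _⟩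
    have h := hfA _ hmem
    rw [hdecomp] at h
    have h2 : μ * pstar ≤ (∑ i, (polCost ν c π i - B i) * gv i) + polReward ν r π * μ :=
      le_trans hμp h
    have hsum : ∑ i, lam i * (polCost ν c π i - B i)
        = (∑ i, (polCost ν c π i - B i) * gv i) / m := by
      rw [Finset.sum_div]
      refine Finset.sum_congr rfl fun i _ => ?_
      rw [hlamdef]
      field_simp
    have h3 : (polReward ν r π - pstar) * m ≤ ∑ i, (polCost ν c π i - B i) * gv i := by
      rw [hm]
      nlinarith [h2]
    rw [hsum, sub_le_iff_le_add, ← sub_le_iff_le_add', le_div_iff₀ hmpos]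
    exact h3
  -- greedy policy for lam
  set g : X → A → ℝ := fun x a => r x a - ∑ i, (c x a i - B i) * lam i with hgdef
  have hgm : ∀ a, Measurable fun x => g x a := fun a =>
    (hrm a).sub (Finset.measurable_sum _ fun i _ => ((hcm a i).sub measurable_const).mul_const _)
  obtain ⟨πg, hπg, hπgmax⟩ := exists_greedy g hgm
  have hLval : L ν r c lam B = polReward ν r πg - ∑ i, lam i * (polCost ν c πg i - B i) := by
    rw [← lagrangian_eq (ν := ν) hπg r c B lam hr hc hrm hcm]
    exact integral_congr_ae (ae_of_all _ fun x => (hπgmax x).symm)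
  refine ⟨lam, hlamnn, ?_, ?_⟩
  · intro lam' hlam'
    have h1 : L ν r c lam B ≤ pstar := by rw [hLval]; exact key πg hπg
    exact le_trans h1 (hweak lam' hlam')
  · rw [hOPTeq]
    exact le_antisymm (by rw [hLval]; exact key πg hπg) (hweak lam hlamnn)



end CBwK
end

section
/- (Crude dual-norm bound used in the proof of Theorem 1.) In the CBwK setting, let b > 0 with 2b < min B. If the problem (r,c,B−2b·1,ν) is feasible, then any minimizer λ*_{B−b·1} of λ ↦ L(λ, B−b·1) over λ ∈ [0,∞)^d satisfies ‖λ*_{B−b·1}‖ ≤ 2/b. -/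
open MeasureTheory Finset

namespace CBwK

variable {X : Type*} [MeasurableSpace X] {A : Type*} [Fintype A] [Nonempty A] {d : ℕ}

/-- Crude dual-norm bound used in the proof of Theorem 1: if `b > 0` with `2b < min B`,
and the problem `(r,c,B−2b·1,ν)` is feasible, then any minimizer `λ*_{B−b·1}` of
`λ ↦ L(λ, B−b·1)` over `λ ≥ 0` satisfies `‖λ*_{B−b·1}‖ ≤ 2/b`. -/
theorem dual_norm_crude_bound
    {X : Type*} [MeasurableSpace X] (ν : Measure X) [IsProbabilityMeasure ν]
    {A : Type*} [Fintype A] [Nonempty A] {d : ℕ} (hd : 0 < d)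
    (r : X → A → ℝ) (c : X → A → Fin d → ℝ) (B : Fin d → ℝ) (b : ℝ)
    (hr : ∀ x a, r x a ∈ Set.Icc (0 : ℝ) 1)
    (hc : ∀ x a i, c x a i ∈ Set.Icc (-1 : ℝ) 1)
    (hrm : ∀ a, Measurable fun x => r x a)
    (hcm : ∀ a i, Measurable fun x => c x a i)
    (hb : 0 < b) (h2b : 2 * b < minComp B)
    (hfeas : Feasible ν c (fun i => B i - 2 * b))
    (lamstar : Fin d → ℝ) (hls0 : ∀ i, 0 ≤ lamstar i)
    (hmin : ∀ lam : Fin d → ℝ, (∀ i, 0 ≤ lam i) →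
      L ν r c lamstar (fun i => B i - b) ≤ L ν r c lam (fun i => B i - b)) :
    enorm lamstar ≤ 2 / b := by
  classical
  obtain ⟨π, ⟨hπ0, hπ1, hπm⟩, hπc⟩ := hfeas
  set C : Fin d → ℝ := fun i => B i - b with hCdef
  have hπle : ∀ x a, π x a ≤ 1 := by
    intro x a
    calc π x a ≤ ∑ a', π x a' :=
          Finset.single_le_sum (fun a' _ => hπ0 x a') (Finset.mem_univ a)
      _ = 1 := hπ1 x
  -- integrability helper
  have hbint : ∀ {f : X → ℝ}, Measurable f → ∀ {M : ℝ}, (∀ x, |f x| ≤ M) →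
      Integrable f ν := by
    intro f hm M hM
    exact (integrable_const M).mono' hm.aestronglyMeasurable
      (ae_of_all _ fun x => by simpa [Real.norm_eq_abs] using hM x)
  -- measurable-sup' helper
  have hsupm : ∀ (f : A → X → ℝ), (∀ a, Measurable (f a)) →
      Measurable fun x => Finset.univ.sup' Finset.univ_nonempty (fun a => f a x) := by
    intro f hf
    have h := Finset.measurable_sup' (s := (Finset.univ : Finset A)) Finset.univ_nonempty
      (fun a _ => hf a)
    have heq : (fun x => Finset.univ.sup' Finset.univ_nonempty (fun a => f a x))
        = Finset.univ.sup' Finset.univ_nonempty f := by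
      funext x; rw [Finset.sup'_apply]
    rw [heq]; exact h
  set M : ℝ := 1 + ∑ i, (1 + |C i|) * lamstar i with hMdef
  -- bound on each term of the sup
  have hterm : ∀ x a, |r x a - ∑ i, (c x a i - C i) * lamstar i| ≤ M := by
    intro x a
    have h1 : |r x a| ≤ 1 := by
      rw [abs_le]; exact ⟨by linarith [(hr x a).1], (hr x a).2⟩
    have h2 : |∑ i, (c x a i - C i) * lamstar i| ≤ ∑ i, (1 + |C i|) * lamstar i := by
      calc |∑ i, (c x a i - C i) * lamstar i| ≤ ∑ i, |(c x a i - C i) * lamstar i| :=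
            Finset.abs_sum_le_sum_abs _ _
        _ ≤ ∑ i, (1 + |C i|) * lamstar i := by
            refine Finset.sum_le_sum fun i _ => ?_
            rw [abs_mul, abs_of_nonneg (hls0 i)]
            refine mul_le_mul_of_nonneg_right ?_ (hls0 i)
            calc |c x a i - C i| ≤ |c x a i| + |C i| := abs_sub _ _
              _ ≤ 1 + |C i| := by
                  have : |c x a i| ≤ 1 := abs_le.2 ⟨(hc x a i).1, (hc x a i).2⟩
                  linarith
    calc |r x a - ∑ i, (c x a i - C i) * lamstar i|
        ≤ |r x a| + |∑ i, (c x a i - C i) * lamstar i| := abs_sub _ _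
      _ ≤ M := by rw [hMdef]; linarith
  -- the integrand of L(lamstar, C)
  set F : X → ℝ := fun x => Finset.univ.sup' Finset.univ_nonempty
    (fun a => r x a - ∑ i, (c x a i - C i) * lamstar i) with hFdef
  have hFm : Measurable F :=
    hsupm _ fun a => (hrm a).sub
      (Finset.measurable_sum _ fun i _ => ((hcm a i).sub measurable_const).mul_const _)
  have hFb : ∀ x, |F x| ≤ M := by
    intro x
    rw [abs_le]
    constructor
    · obtain ⟨a0⟩ := (inferInstance : Nonempty A)
      refine le_trans ?_ (Finset.le_sup' _ (Finset.mem_univ a0))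
      exact (abs_le.1 (hterm x a0)).1
    · exact Finset.sup'_le _ _ fun a _ => (abs_le.1 (hterm x a)).2
  have hFint : Integrable F ν := hbint hFm hFb
  -- upper bound: L(lamstar, C) ≤ L(0, C) ≤ 1
  have hL0 : L ν r c (fun _ => 0) C ≤ 1 := by
    have hG : ∀ x, (Finset.univ.sup' Finset.univ_nonempty
        (fun a => r x a - ∑ i, (c x a i - C i) * (fun _ => (0:ℝ)) i))
        = Finset.univ.sup' Finset.univ_nonempty (fun a => r x a) := by
      intro x; congr 1; funext a; simp
    have hGm : Measurable fun x => Finset.univ.sup' Finset.univ_nonempty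
        (fun a => r x a) := hsupm _ hrm
    have hGb : ∀ x, |Finset.univ.sup' Finset.univ_nonempty (fun a => r x a)| ≤ 1 := by
      intro x
      rw [abs_le]
      constructor
      · obtain ⟨a0⟩ := (inferInstance : Nonempty A)
        refine le_trans ?_ (Finset.le_sup' _ (Finset.mem_univ a0))
        linarith [(hr x a0).1]
      · exact Finset.sup'_le _ _ fun a _ => (hr x a).2
    have : L ν r c (fun _ => 0) C = ∫ x, Finset.univ.sup' Finset.univ_nonempty
        (fun a => r x a) ∂ν := by
      unfold L; exact integral_congr_ae (ae_of_all _ hG)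
    rw [this]
    calc (∫ x, Finset.univ.sup' Finset.univ_nonempty (fun a => r x a) ∂ν)
        ≤ ∫ _x, (1:ℝ) ∂ν :=
          integral_mono (hbint hGm hGb) (integrable_const 1)
            (fun x => (abs_le.1 (hGb x)).2)
      _ = 1 := by simp
  have hLub : L ν r c lamstar C ≤ 1 := le_trans (hmin (fun _ => 0) fun _ => le_refl 0) hL0
  -- pieces of the decomposition
  set g1 : X → ℝ := fun x => ∑ a, r x a * π x a with hg1def
  set g2 : Fin d → X → ℝ := fun i x => ∑ a, c x a i * π x a with hg2def
  set K : ℝ := ∑ i, lamstar i * C i with hKdef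
  have hg1m : Measurable g1 := Finset.measurable_sum _ fun a _ => (hrm a).mul (hπm a)
  have hg2m : ∀ i, Measurable (g2 i) := fun i =>
    Finset.measurable_sum _ fun a _ => (hcm a i).mul (hπm a)
  have habs1 : ∀ x, |g1 x| ≤ 1 := by
    intro x
    calc |g1 x| ≤ ∑ a, |r x a * π x a| := Finset.abs_sum_le_sum_abs _ _
      _ ≤ ∑ a, π x a := by
          refine Finset.sum_le_sum fun a _ => ?_
          rw [abs_mul, abs_of_nonneg (hr x a).1, abs_of_nonneg (hπ0 x a)]
          nlinarith [(hr x a).2, hπ0 x a]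
      _ = 1 := hπ1 x
  have habs2 : ∀ i x, |g2 i x| ≤ 1 := by
    intro i x
    calc |g2 i x| ≤ ∑ a, |c x a i * π x a| := Finset.abs_sum_le_sum_abs _ _
      _ ≤ ∑ a, π x a := by
          refine Finset.sum_le_sum fun a _ => ?_
          rw [abs_mul, abs_of_nonneg (hπ0 x a)]
          have : |c x a i| ≤ 1 := abs_le.2 ⟨(hc x a i).1, (hc x a i).2⟩
          nlinarith [hπ0 x a]
      _ = 1 := hπ1 x
  have hg1int : Integrable g1 ν := hbint hg1m (habs1)
  have hg2int : ∀ i, Integrable (g2 i) ν := fun i => hbint (hg2m i) (habs2 i)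
  -- T x = ∑_a π_a(x) * (term a) in decomposed form
  set T : X → ℝ := fun x => g1 x - (∑ i, lamstar i * g2 i x) + K with hTdef
  have hTeq : ∀ x, T x = ∑ a, π x a * (r x a - ∑ i, (c x a i - C i) * lamstar i) := by
    intro x
    have h1 : ∑ a, π x a * (r x a - ∑ i, (c x a i - C i) * lamstar i)
        = ∑ a, π x a * r x a - ∑ a, π x a * ∑ i, (c x a i - C i) * lamstar i := by
      rw [← Finset.sum_sub_distrib]
      exact Finset.sum_congr rfl fun a _ => mul_sub _ _ _
    have h2 : ∑ a, π x a * ∑ i, (c x a i - C i) * lamstar i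
        = ∑ i, (lamstar i * g2 i x - lamstar i * C i * ∑ a, π x a) := by
      calc ∑ a, π x a * ∑ i, (c x a i - C i) * lamstar i
          = ∑ a, ∑ i, (lamstar i * (c x a i * π x a) - lamstar i * C i * π x a) := by
            refine Finset.sum_congr rfl fun a _ => ?_
            rw [Finset.mul_sum]
            exact Finset.sum_congr rfl fun i _ => by ring
        _ = ∑ i, ∑ a, (lamstar i * (c x a i * π x a) - lamstar i * C i * π x a) :=
            Finset.sum_comm
        _ = ∑ i, (lamstar i * g2 i x - lamstar i * C i * ∑ a, π x a) := by
            refine Finset.sum_congr rfl fun i _ => ?_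
            rw [Finset.sum_sub_distrib, ← Finset.mul_sum, ← Finset.mul_sum, hg2def]
    have h3 : ∑ a, π x a * r x a = g1 x := by
      rw [hg1def]; exact Finset.sum_congr rfl fun a _ => mul_comm _ _
    rw [h1, h2, h3, hπ1 x]
    simp only [mul_one, Finset.sum_sub_distrib, ← hKdef]
    ring
  have hTint : Integrable T ν := by
    refine Integrable.add (Integrable.sub hg1int ?_) (integrable_const K)
    exact integrable_finset_sum _ fun i _ => (hg2int i).const_mul _
  -- pointwise T ≤ F
  have hTF : ∀ x, T x ≤ F x := by
    intro x
    rw [hTeq x]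
    calc ∑ a, π x a * (r x a - ∑ i, (c x a i - C i) * lamstar i)
        ≤ ∑ a, π x a * F x := by
          refine Finset.sum_le_sum fun a _ => ?_
          exact mul_le_mul_of_nonneg_left
            (Finset.le_sup' (fun a => r x a - ∑ i, (c x a i - C i) * lamstar i)
              (Finset.mem_univ a)) (hπ0 x a)
      _ = F x := by rw [← Finset.sum_mul, hπ1 x, one_mul]
  -- ∫ T ≤ L(lamstar, C)
  have hintTF : ∫ x, T x ∂ν ≤ L ν r c lamstar C := by
    unfold L
    exact integral_mono hTint hFint hTF
  -- compute ∫ T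
  have hTval : ∫ x, T x ∂ν
      = polReward ν r π - (∑ i, lamstar i * polCost ν c π i) + K := by
    have hsint : Integrable (fun x => ∑ i, lamstar i * g2 i x) ν :=
      integrable_finset_sum _ fun i _ => (hg2int i).const_mul _
    have e1 : ∫ x, T x ∂ν
        = (∫ x, (g1 x - ∑ i, lamstar i * g2 i x) ∂ν) + ∫ _x, K ∂ν :=
      integral_add (hg1int.sub hsint) (integrable_const K)
    have e2 : ∫ x, (g1 x - ∑ i, lamstar i * g2 i x) ∂ν
        = (∫ x, g1 x ∂ν) - ∫ x, ∑ i, lamstar i * g2 i x ∂ν :=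
      integral_sub hg1int hsint
    have e3 : ∫ x, ∑ i, lamstar i * g2 i x ∂ν
        = ∑ i, ∫ x, lamstar i * g2 i x ∂ν :=
      integral_finset_sum _ fun i _ => (hg2int i).const_mul _
    have e4 : ∀ i : Fin d, ∫ x, lamstar i * g2 i x ∂ν = lamstar i * polCost ν c π i := by
      intro i
      rw [MeasureTheory.integral_const_mul]
      rfl
    have e5 : ∫ x, g1 x ∂ν = polReward ν r π := rfl
    rw [e1, e2, e3, e5, Finset.sum_congr rfl fun i _ => e4 i]
    simp
  -- lower-bound ∫ T
  have hRnn : 0 ≤ polReward ν r π := by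
    unfold polReward
    refine integral_nonneg fun x => ?_
    exact Finset.sum_nonneg fun a _ => mul_nonneg (hr x a).1 (hπ0 x a)
  have hlow : b * ∑ i, lamstar i ≤ ∫ x, T x ∂ν := by
    rw [hTval, hKdef]
    have hsum : ∑ i, lamstar i * polCost ν c π i ≤ ∑ i, lamstar i * (B i - 2 * b) :=
      Finset.sum_le_sum fun i _ => mul_le_mul_of_nonneg_left (hπc i) (hls0 i)
    have : ∑ i, lamstar i * C i - ∑ i, lamstar i * (B i - 2 * b) = b * ∑ i, lamstar i := by
      rw [← Finset.sum_sub_distrib, Finset.mul_sum, hCdef]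
      exact Finset.sum_congr rfl fun i _ => by ring
    linarith
  -- combine: b * ∑ lamstar ≤ 1
  have hkey : b * ∑ i, lamstar i ≤ 1 := le_trans hlow (le_trans hintTF hLub)
  have hsumle : ∑ i, lamstar i ≤ 1 / b := by
    rw [le_div_iff₀ hb]; linarith
  -- from Euclidean to ℓ1
  have hsumnn : 0 ≤ ∑ i, lamstar i := Finset.sum_nonneg fun i _ => hls0 i
  have henorm : enorm lamstar ≤ ∑ i, lamstar i := by
    unfold enorm
    have h1 : ∑ i, lamstar i ^ 2 ≤ (∑ i, lamstar i) ^ 2 := by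
      rw [sq (∑ i, lamstar i), Finset.sum_mul]
      refine Finset.sum_le_sum fun i _ => ?_
      rw [sq]
      exact mul_le_mul_of_nonneg_left
        (Finset.single_le_sum (fun j _ => hls0 j) (Finset.mem_univ i)) (hls0 i)
    calc Real.sqrt (∑ i, lamstar i ^ 2) ≤ Real.sqrt ((∑ i, lamstar i) ^ 2) :=
          Real.sqrt_le_sqrt h1
      _ = ∑ i, lamstar i := Real.sqrt_sq hsumnn
  calc enorm lamstar ≤ ∑ i, lamstar i := henorm
    _ ≤ 1 / b := hsumle
    _ ≤ 2 / b := by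
        rw [div_le_div_iff₀ hb hb]; nlinarith

end CBwK
end

section
/- (Example 1 of the paper.) Consider the CBwK setting with scalar costs (d = 1): suppose there is a baseline action a₀ ∈ A with c(x,a₀) = 0 for all x ∈ X, and a constant α > 0 with c(x,a) ≥ α for all x ∈ X and all a ≠ a₀. Then for every B ≥ 0, OPT(r,c,B) − OPT(r,c,0) ≤ B/α. In particular, every static policy π with E_{X∼ν}[Σ_{a∈A} c(X,a) π_a(X)] ≤ B satisfies E_{X∼ν}[Σ_{a∈A} r(X,a) π_a(X)] ≤ E_{X∼ν}[r(X,a₀)] + B/α. -/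
open MeasureTheory Finset

namespace CBwK1

variable {X : Type*} [MeasurableSpace X] {A : Type*} [Fintype A] [Nonempty A]

/-- A static policy: a measurable map `X → P(A)` with components `(π_a)_{a∈A}`. -/
def IsPolicy (π : X → A → ℝ) : Prop :=
  (∀ x a, 0 ≤ π x a) ∧ (∀ x, ∑ a, π x a = 1) ∧ (∀ a, Measurable fun x => π x a)

/-- Expected reward `E_{X∼ν}[Σ_a r(X,a) π_a(X)]` of a policy. -/
noncomputable def polReward (ν : Measure X) (r : X → A → ℝ) (π : X → A → ℝ) : ℝ :=
  ∫ x, ∑ a, r x a * π x a ∂ν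

/-- Expected (scalar) cost `E_{X∼ν}[Σ_a c(X,a) π_a(X)]` of a policy. -/
noncomputable def polCost (ν : Measure X) (c : X → A → ℝ) (π : X → A → ℝ) : ℝ :=
  ∫ x, ∑ a, c x a * π x a ∂ν

/-- `OPT(r,c,B')` for a scalar cost. -/
noncomputable def OPT (ν : Measure X) (r : X → A → ℝ) (c : X → A → ℝ) (B' : ℝ) : ℝ :=
  sSup {y : ℝ | ∃ π, IsPolicy π ∧ polCost ν c π ≤ B' ∧ y = polReward ν r π}

lemma integrable_of_bdd {f : X → ℝ} (ν : Measure X) [IsProbabilityMeasure ν]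
    (hm : Measurable f) (C : ℝ) (hC : ∀ x, |f x| ≤ C) : Integrable f ν :=
  ⟨hm.aestronglyMeasurable,
    HasFiniteIntegral.of_bounded (C := C) (Filter.Eventually.of_forall hC)⟩

lemma key_bound
    (ν : Measure X) [IsProbabilityMeasure ν]
    (r : X → A → ℝ) (c : X → A → ℝ) (B α : ℝ)
    (hr : ∀ x a, r x a ∈ Set.Icc (0 : ℝ) 1)
    (hc : ∀ x a, c x a ∈ Set.Icc (-1 : ℝ) 1)
    (hrm : ∀ a, Measurable fun x => r x a)
    (hcm : ∀ a, Measurable fun x => c x a)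
    (a₀ : A) (hnull : ∀ x, c x a₀ = 0)
    (hα : 0 < α) (hcost : ∀ x a, a ≠ a₀ → α ≤ c x a)
    (π : X → A → ℝ) (hπ : IsPolicy π) (hcπ : polCost ν c π ≤ B) :
    polReward ν r π ≤ (∫ x, r x a₀ ∂ν) + B / α := by
  classical
  obtain ⟨hπ0, hπ1, hπm⟩ := hπ
  have hπle1 : ∀ x a, π x a ≤ 1 := by
    intro x a
    calc π x a ≤ ∑ b, π x b :=
          Finset.single_le_sum (fun b _ => hπ0 x b) (Finset.mem_univ a)
      _ = 1 := hπ1 x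
  have hpt : ∀ x, ∑ a, r x a * π x a ≤ r x a₀ + α⁻¹ * ∑ a, c x a * π x a := by
    intro x
    rw [Fintype.sum_eq_add_sum_compl a₀ (fun a => r x a * π x a),
        Fintype.sum_eq_add_sum_compl a₀ (fun a => c x a * π x a), hnull x, zero_mul, zero_add]
    have h1 : r x a₀ * π x a₀ ≤ r x a₀ :=
      mul_le_of_le_one_right (hr x a₀).1 (hπle1 x a₀)
    have h2 : ∑ a ∈ {a₀}ᶜ, r x a * π x a ≤ α⁻¹ * ∑ a ∈ {a₀}ᶜ, c x a * π x a := by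
      rw [Finset.mul_sum]
      refine Finset.sum_le_sum fun a ha => ?_
      have hne : a ≠ a₀ := by simpa using ha
      have hca := hcost x a hne
      have hb1 : r x a * π x a ≤ π x a := mul_le_of_le_one_left (hπ0 x a) (hr x a).2
      have hb2 : α * π x a ≤ c x a * π x a :=
        mul_le_mul_of_nonneg_right hca (hπ0 x a)
      have hb3 : π x a ≤ α⁻¹ * (c x a * π x a) := by
        rw [le_inv_mul_iff₀ hα]
        exact hb2
      linarith
    linarith
  have hrint : ∀ a, Integrable (fun x => r x a * π x a) ν := by
    intro a
    refine integrable_of_bdd ν ((hrm a).mul (hπm a)) 1 fun x => ?_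
    rw [abs_of_nonneg (mul_nonneg (hr x a).1 (hπ0 x a))]
    exact mul_le_one₀ (hr x a).2 (hπ0 x a) (hπle1 x a)
  have hcint : ∀ a, Integrable (fun x => c x a * π x a) ν := by
    intro a
    refine integrable_of_bdd ν ((hcm a).mul (hπm a)) 1 fun x => ?_
    rw [abs_mul]
    have h1 : |c x a| ≤ 1 := abs_le.mpr ⟨(hc x a).1, (hc x a).2⟩
    have h2 : |π x a| ≤ 1 := by
      rw [abs_of_nonneg (hπ0 x a)]; exact hπle1 x a
    calc |c x a| * |π x a| ≤ 1 * 1 :=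
          mul_le_mul h1 h2 (abs_nonneg _) zero_le_one
      _ = 1 := by ring
  have hint1 : Integrable (fun x => ∑ a, r x a * π x a) ν :=
    integrable_finset_sum _ fun a _ => hrint a
  have hintc : Integrable (fun x => ∑ a, c x a * π x a) ν :=
    integrable_finset_sum _ fun a _ => hcint a
  have hra : Integrable (fun x => r x a₀) ν := by
    refine integrable_of_bdd ν (hrm a₀) 1 fun x => ?_
    rw [abs_of_nonneg (hr x a₀).1]; exact (hr x a₀).2
  have hint2 : Integrable (fun x => r x a₀ + α⁻¹ * ∑ a, c x a * π x a) ν :=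
    hra.add (hintc.const_mul _)
  have hmono := integral_mono hint1 hint2 hpt
  have heq : ∫ x, (r x a₀ + α⁻¹ * ∑ a, c x a * π x a) ∂ν
      = (∫ x, r x a₀ ∂ν) + α⁻¹ * polCost ν c π := by
    rw [integral_add hra (hintc.const_mul _), integral_const_mul]
    rfl
  have hcb : α⁻¹ * polCost ν c π ≤ α⁻¹ * B :=
    mul_le_mul_of_nonneg_left hcπ (le_of_lt (inv_pos.mpr hα))
  have : α⁻¹ * B = B / α := by rw [div_eq_mul_inv, mul_comm]
  unfold polReward
  linarith [hmono, heq.le, heq.ge]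

/-- Example 1 of the paper: with a baseline null-cost action `a₀` and all other actions of
expected cost at least `α > 0`, one has `OPT(r,c,B) − OPT(r,c,0) ≤ B/α` for every `B ≥ 0`;
in particular every `B`-feasible policy has expected reward at most
`E_{X∼ν}[r(X,a₀)] + B/α`. -/
theorem opt_gap_baseline_action
    (ν : Measure X) [IsProbabilityMeasure ν]
    (r : X → A → ℝ) (c : X → A → ℝ) (B α : ℝ)
    (hr : ∀ x a, r x a ∈ Set.Icc (0 : ℝ) 1)
    (hc : ∀ x a, c x a ∈ Set.Icc (-1 : ℝ) 1)
    (hrm : ∀ a, Measurable fun x => r x a)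
    (hcm : ∀ a, Measurable fun x => c x a)
    (a₀ : A) (hnull : ∀ x, c x a₀ = 0)
    (hα : 0 < α) (hcost : ∀ x a, a ≠ a₀ → α ≤ c x a)
    (hB : 0 ≤ B) :
    OPT ν r c B - OPT ν r c 0 ≤ B / α
      ∧ ∀ π : X → A → ℝ, IsPolicy π → polCost ν c π ≤ B →
          polReward ν r π ≤ (∫ x, r x a₀ ∂ν) + B / α := by
  classical
  have key := key_bound ν r c B α hr hc hrm hcm a₀ hnull hα hcost
  have key0 := key_bound ν r c 0 α hr hc hrm hcm a₀ hnull hα hcost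
  set I₀ := ∫ x, r x a₀ ∂ν with hI₀
  have hI₀nn : 0 ≤ I₀ := integral_nonneg fun x => (hr x a₀).1
  have hBα : 0 ≤ B / α := div_nonneg hB hα.le
  refine ⟨?_, fun π hπ hcπ => key π hπ hcπ⟩
  -- baseline policy
  have hbase : IsPolicy (fun (_ : X) (a : A) => if a = a₀ then (1:ℝ) else 0) := by
    refine ⟨fun x a => by positivity, fun x => by simp, fun a => measurable_const⟩
  have hbcost : polCost ν c (fun (_ : X) (a : A) => if a = a₀ then (1:ℝ) else 0) = 0 := by
    unfold polCost
    simp [mul_ite, mul_one, mul_zero, Finset.sum_ite_eq', hnull]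
  have hbrew : polReward ν r (fun (_ : X) (a : A) => if a = a₀ then (1:ℝ) else 0) = I₀ := by
    unfold polReward
    simp [mul_ite, mul_one, mul_zero, Finset.sum_ite_eq']
    rfl
  have hmem : I₀ ∈ {y : ℝ | ∃ π, IsPolicy π ∧ polCost ν c π ≤ (0:ℝ) ∧ y = polReward ν r π} :=
    ⟨_, hbase, hbcost.le, hbrew.symm⟩
  have hbdd : BddAbove {y : ℝ | ∃ π, IsPolicy π ∧ polCost ν c π ≤ (0:ℝ) ∧ y = polReward ν r π} := by
    refine ⟨I₀ + 0 / α, fun y hy => ?_⟩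
    obtain ⟨π, hπ, hcπ, rfl⟩ := hy
    exact key0 π hπ hcπ
  have h0 : I₀ ≤ OPT ν r c 0 := le_csSup hbdd hmem
  have hB' : OPT ν r c B ≤ I₀ + B / α := by
    apply Real.sSup_le
    · rintro y ⟨π, hπ, hcπ, rfl⟩
      exact key π hπ hcπ
    · linarith
  linarith

end CBwK1
end
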